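/- Let a ≥ 0 and λ₀ > 0. There exists C > 0 such that for all λ ≥ λ₀ and all y ∈ H³(-1,0) with y(-1) = y(0) = y'(0) = 0, one has ∑_{k=0}^{3} λ^k ‖∂_x^{3-k} y‖²_{L²(-1,0)} ≤ C ( ‖y''' + (a - λ) y'‖²_{L²(-1,0)} + λ³ ‖y‖²_{L²(-1,0)} ). -/

import Mathlib

open MeasureTheory Finset intervalIntegral

lemma sqint_nonneg (g : ℝ → ℝ) : 0 ≤ ∫ x in (-1:ℝ)..0, (g x)^2 :=
  intervalIntegral.integral_nonneg (by norm_num) (fun x _ => sq_nonneg _)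

lemma absint_nonneg (g : ℝ → ℝ) : 0 ≤ ∫ x in (-1:ℝ)..0, |g x| :=
  intervalIntegral.integral_nonneg (by norm_num) (fun x _ => abs_nonneg _)

lemma young_int (u v : ℝ → ℝ) (hu : Continuous u) (hv : Continuous v) {s : ℝ} (hs : 0 < s) :
    2*s*(∫ x in (-1:ℝ)..0, |u x * v x|) ≤
      s^2 * (∫ x in (-1:ℝ)..0, (u x)^2) + (∫ x in (-1:ℝ)..0, (v x)^2) := by
  have key : ∀ x ∈ Set.Icc (-1:ℝ) 0, |u x * v x| ≤ (s^2 * (u x)^2 + (v x)^2)/(2*s) := by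
    intro x _
    rw [abs_mul, le_div_iff₀ (by positivity)]
    nlinarith [sq_nonneg (s * |u x| - |v x|), sq_abs (u x), sq_abs (v x),
      abs_nonneg (u x), abs_nonneg (v x), hs]
  have hi1 : IntervalIntegrable (fun x => |u x * v x|) volume (-1) 0 :=
    ((hu.mul hv).abs).intervalIntegrable _ _
  have hi2 : IntervalIntegrable (fun x => (s^2 * (u x)^2 + (v x)^2)/(2*s)) volume (-1) 0 := by
    apply Continuous.intervalIntegrable; continuity
  have h := intervalIntegral.integral_mono_on (by norm_num : (-1:ℝ) ≤ 0) hi1 hi2 key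
  rw [intervalIntegral.integral_div, intervalIntegral.integral_add
      (f := fun x => s^2 * (u x)^2) (g := fun x => (v x)^2) ((continuous_const.mul (hu.pow 2)).intervalIntegrable _ _)
      ((hv.pow 2).intervalIntegrable _ _),
      intervalIntegral.integral_const_mul, le_div_iff₀ (by positivity)] at h
  linarith

lemma parts (u v u' v' : ℝ → ℝ) (hu : ∀ x, HasDerivAt u (u' x) x)
    (hv : ∀ x, HasDerivAt v (v' x) x) (hu' : Continuous u') (hv' : Continuous v') :
    ∫ x in (-1:ℝ)..0, u' x * v x
      = u 0 * v 0 - u (-1) * v (-1) - ∫ x in (-1:ℝ)..0, u x * v' x := by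
  have hcu : Continuous u := by
    rw [continuous_iff_continuousAt]; exact fun x => (hu x).differentiableAt.continuousAt
  have hcv : Continuous v := by
    rw [continuous_iff_continuousAt]; exact fun x => (hv x).differentiableAt.continuousAt
  have h := intervalIntegral.integral_deriv_mul_eq_sub (a := (-1:ℝ)) (b := 0)
    (fun x _ => hu x) (fun x _ => hv x) (hu'.intervalIntegrable _ _) (hv'.intervalIntegrable _ _)
  rw [intervalIntegral.integral_add (f := fun x => u' x * v x) (g := fun x => u x * v' x) ((hu'.mul hcv).intervalIntegrable _ _)
    ((hcu.mul hv').intervalIntegrable _ _)] at h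
  linarith

lemma neg_int_le_abs (g : ℝ → ℝ) {A B : ℝ} (hab : A ≤ B) :
    -(∫ x in A..B, g x) ≤ ∫ x in A..B, |g x| := by
  have h := intervalIntegral.abs_integral_le_integral_abs (f := g) (a := A) (b := B)
    (μ := volume) hab
  linarith [neg_abs_le (∫ x in A..B, g x)]

lemma int_le_abs (g : ℝ → ℝ) {A B : ℝ} (hab : A ≤ B) :
    (∫ x in A..B, g x) ≤ ∫ x in A..B, |g x| := by
  have h := intervalIntegral.abs_integral_le_integral_abs (f := g) (a := A) (b := B)
    (μ := volume) hab
  linarith [le_abs_self (∫ x in A..B, g x)]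

set_option maxHeartbeats 1000000 in
theorem third_order_elliptic_estimate (a lam₀ : ℝ) (ha : 0 ≤ a) (hlam₀ : 0 < lam₀) :
    ∃ C : ℝ, 0 < C ∧ ∀ lam : ℝ, lam₀ ≤ lam → ∀ y : ℝ → ℝ, ContDiff ℝ 3 y →
      y (-1) = 0 → y 0 = 0 → deriv y 0 = 0 →
      ∑ k ∈ Finset.range 4, lam^k * (∫ x in (-1:ℝ)..0, (iteratedDeriv (3-k) y x)^2) ≤
        C * ((∫ x in (-1:ℝ)..0, (iteratedDeriv 3 y x + (a - lam) * deriv y x)^2) +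
             lam^3 * (∫ x in (-1:ℝ)..0, (y x)^2)) := by
  set m₀ : ℝ := Real.sqrt lam₀ with hm₀def
  have hm₀ : 0 < m₀ := Real.sqrt_pos.mpr hlam₀
  have hm₀2 : m₀^2 = lam₀ := Real.sq_sqrt hlam₀.le
  set c₂ : ℝ := 2*(1 + a/lam₀)^2 with hc₂def
  have hc₂ : 2 ≤ c₂ := by
    have h1 : 0 ≤ a/lam₀ := div_nonneg ha hlam₀.le
    nlinarith
  set K : ℝ := 8*c₂ + 8 + 8/m₀ with hKdef
  have hK : 0 < K := by positivity
  refine ⟨3 + (4/3)*((3 + K/2) + (K/2 + a*(4*a+1)/(2*m₀^4)))*(1+c₂), by positivity, ?_⟩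
  intro lam hlam y hy hym1 hy0 hdy0
  have hlampos : 0 < lam := lt_of_lt_of_le hlam₀ hlam
  set m : ℝ := Real.sqrt lam with hmdef
  have hm : 0 < m := Real.sqrt_pos.mpr hlampos
  have hm2 : m^2 = lam := Real.sq_sqrt hlampos.le
  have hmm₀ : m₀ ≤ m := Real.sqrt_le_sqrt hlam
  -- expand the sum and iterated derivatives
  have e1 : iteratedDeriv 1 y = deriv y := iteratedDeriv_one
  have e2 : iteratedDeriv 2 y = deriv (deriv y) := by
    rw [show (2:ℕ) = 1+1 from rfl, iteratedDeriv_succ, iteratedDeriv_one]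
  have e3 : iteratedDeriv 3 y = deriv (deriv (deriv y)) := by
    rw [show (3:ℕ) = 2+1 from rfl, iteratedDeriv_succ, e2]
  rw [Finset.sum_range_succ, Finset.sum_range_succ, Finset.sum_range_succ,
    Finset.sum_range_one]
  norm_num [e1, e2, e3, iteratedDeriv_zero]
  -- smoothness bookkeeping
  have hy' : ContDiff ℝ ((2:ℕ)+1) y := by exact_mod_cast hy
  have h2 : ContDiff ℝ (2:ℕ) (deriv y) := (contDiff_succ_iff_deriv.mp (by exact_mod_cast hy')).2.2
  have h1 : ContDiff ℝ (1:ℕ) (deriv (deriv y)) :=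
    (contDiff_succ_iff_deriv.mp (by exact_mod_cast h2)).2.2
  have h0 : ContDiff ℝ (0:ℕ) (deriv (deriv (deriv y))) :=
    (contDiff_succ_iff_deriv.mp (by exact_mod_cast h1)).2.2
  set y₁ := deriv y with hy₁def
  set y₂ := deriv y₁ with hy₂def
  set y₃ := deriv y₂ with hy₃def
  have hdy : Differentiable ℝ y := hy.differentiable (by norm_num)
  have hdy1 : Differentiable ℝ y₁ := h2.differentiable (by norm_num)
  have hdy2 : Differentiable ℝ y₂ := h1.differentiable (by norm_num)
  have hcy : Continuous y := hdy.continuous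
  have hcy1 : Continuous y₁ := hdy1.continuous
  have hcy2 : Continuous y₂ := hdy2.continuous
  have hcy3 : Continuous y₃ := h0.continuous
  have Hy : ∀ x, HasDerivAt y (y₁ x) x := fun x => (hdy x).hasDerivAt
  have Hy1 : ∀ x, HasDerivAt y₁ (y₂ x) x := fun x => (hdy1 x).hasDerivAt
  have Hy2 : ∀ x, HasDerivAt y₂ (y₃ x) x := fun x => (hdy2 x).hasDerivAt
  set f : ℝ → ℝ := fun x => y₃ x + (a - lam) * y₁ x with hfdef
  have hcf : Continuous f := by rw [hfdef]; exact hcy3.add (continuous_const.mul hcy1)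
  -- quantities
  set α := ∫ x in (-1:ℝ)..0, (y x)^2 with hαdef
  set β := ∫ x in (-1:ℝ)..0, (y₁ x)^2 with hβdef
  set d := ∫ x in (-1:ℝ)..0, (y₂ x)^2 with hddef
  set e := ∫ x in (-1:ℝ)..0, (y₃ x)^2 with hedef
  set φ := ∫ x in (-1:ℝ)..0, (y₃ x + (a - lam) * y₁ x)^2 with hφdef
  have hφf : (∫ x in (-1:ℝ)..0, (f x)^2) = φ := by rw [hφdef]
  set p := y₁ (-1) with hpdef
  set q := y₂ (-1) with hqdef
  have hb0 : y₁ 0 = 0 := hdy0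
  set J1 := ∫ x in (-1:ℝ)..0, |y x * y₂ x| with hJ1def
  set J2 := ∫ x in (-1:ℝ)..0, |y₁ x * f x| with hJ2def
  set Jf := ∫ x in (-1:ℝ)..0, |y x * f x| with hJfdef
  set Jq := ∫ x in (-1:ℝ)..0, |y₂ x * y₃ x| with hJqdef
  have hα0 : 0 ≤ α := by rw [hαdef]; exact sqint_nonneg _
  have hβ0 : 0 ≤ β := by rw [hβdef]; exact sqint_nonneg _
  have hd0 : 0 ≤ d := by rw [hddef]; exact sqint_nonneg _
  have he0 : 0 ≤ e := by rw [hedef]; exact sqint_nonneg _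
  have hφ0 : 0 ≤ φ := by rw [hφdef]; exact sqint_nonneg _
  -- power bookkeeping
  have hm4 : m^4 = lam^2 := by rw [← hm2]; ring
  have hm6 : m^6 = lam^3 := by rw [← hm2]; ring
  -- squares as products
  have hsqβ : β = ∫ x in (-1:ℝ)..0, y₁ x * y₁ x := by
    rw [hβdef]; congr 1; funext x; rw [pow_two]
  have hsqd : d = ∫ x in (-1:ℝ)..0, y₂ x * y₂ x := by
    rw [hddef]; congr 1; funext x; rw [pow_two]
  -- integration by parts identities
  have I1 : (∫ x in (-1:ℝ)..0, y x * y₁ x) = 0 := by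
    have h := parts y y y₁ y₁ Hy Hy hcy1 hcy1
    rw [hym1, hy0] at h
    have hc : (∫ x in (-1:ℝ)..0, y₁ x * y x) = ∫ x in (-1:ℝ)..0, y x * y₁ x :=
      intervalIntegral.integral_congr (fun x _ => mul_comm _ _)
    rw [hc] at h; linarith
  have I2 : (∫ x in (-1:ℝ)..0, y₂ x * y₁ x) = -p^2/2 := by
    have h := parts y₁ y₁ y₂ y₂ Hy1 Hy1 hcy2 hcy2
    rw [hb0] at h
    have hc : (∫ x in (-1:ℝ)..0, y₁ x * y₂ x) = ∫ x in (-1:ℝ)..0, y₂ x * y₁ x :=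
      intervalIntegral.integral_congr (fun x _ => mul_comm _ _)
    rw [hc] at h; rw [hpdef]; linarith [h]
  have I3 : (∫ x in (-1:ℝ)..0, y₃ x * y x) = p^2/2 := by
    have h := parts y₂ y y₃ y₁ Hy2 Hy hcy3 hcy1
    rw [hym1, hy0, I2] at h; linarith
  have I4 : (∫ x in (-1:ℝ)..0, y₃ x * y₁ x) = -(q*p) - d := by
    have h := parts y₂ y₁ y₃ y₂ Hy2 Hy1 hcy3 hcy2
    rw [hb0, ← hsqd] at h; rw [h]; ring
  have I5 : β = -(∫ x in (-1:ℝ)..0, y x * y₂ x) := by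
    have h := parts y y₁ y₁ y₂ Hy Hy1 hcy1 hcy2
    rw [hym1, hy0, ← hsqβ] at h; linarith
  -- decompositions of integrals against f
  have hfuny : (fun x => f x * y x) = fun x => y₃ x * y x + (a-lam)*(y₁ x * y x) := by
    funext x; rw [hfdef]; ring
  have hcomm_y1y : (∫ x in (-1:ℝ)..0, y₁ x * y x) = ∫ x in (-1:ℝ)..0, y x * y₁ x :=
    intervalIntegral.integral_congr (fun x _ => mul_comm _ _)
  have IFy : (∫ x in (-1:ℝ)..0, f x * y x)
      = (∫ x in (-1:ℝ)..0, y₃ x * y x) + (a-lam)*(∫ x in (-1:ℝ)..0, y x * y₁ x) := by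
    rw [show (∫ x in (-1:ℝ)..0, f x * y x)
        = ∫ x in (-1:ℝ)..0, (y₃ x * y x + (a-lam)*(y₁ x * y x)) from by rw [← hfuny],
      intervalIntegral.integral_add (f := fun x => y₃ x * y x) (g := fun x => (a-lam)*(y₁ x * y x)) ((hcy3.mul hcy).intervalIntegrable _ _)
        ((continuous_const.mul (hcy1.mul hcy)).intervalIntegrable _ _),
      intervalIntegral.integral_const_mul, hcomm_y1y]
  have hfuny1 : (fun x => f x * y₁ x) = fun x => y₃ x * y₁ x + (a-lam)*(y₁ x * y₁ x) := by
    funext x; rw [hfdef]; ring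
  have IFy1 : (∫ x in (-1:ℝ)..0, f x * y₁ x)
      = (∫ x in (-1:ℝ)..0, y₃ x * y₁ x) + (a-lam)*β := by
    rw [show (∫ x in (-1:ℝ)..0, f x * y₁ x)
        = ∫ x in (-1:ℝ)..0, (y₃ x * y₁ x + (a-lam)*(y₁ x * y₁ x)) from by rw [← hfuny1],
      intervalIntegral.integral_add (f := fun x => y₃ x * y₁ x) (g := fun x => (a-lam)*(y₁ x * y₁ x)) ((hcy3.mul hcy1).intervalIntegrable _ _)
        ((continuous_const.mul (hcy1.mul hcy1)).intervalIntegrable _ _),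
      intervalIntegral.integral_const_mul, ← hsqβ]
  -- p² = 2 ∫ f y  and hence  p² ≤ 2 Jf
  have Hp : p^2 = 2*(∫ x in (-1:ℝ)..0, f x * y x) := by rw [IFy, I1, I3]; ring
  have H4 : p^2 ≤ 2*Jf := by
    have h := int_le_abs (fun x => f x * y x) (by norm_num : (-1:ℝ) ≤ 0)
    have hc : (∫ x in (-1:ℝ)..0, |f x * y x|) = Jf := by
      rw [hJfdef]; exact intervalIntegral.integral_congr (fun x _ => by rw [abs_mul, abs_mul, mul_comm])
    rw [Hp]; rw [hc] at h; linarith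
  -- the main identity:  d + lam β ≤ a β + |p||q| + J2
  have H9 : d + lam*β ≤ a*β + |p| * |q| + J2 := by
    have h : (∫ x in (-1:ℝ)..0, f x * y₁ x) = -(q*p) - d + (a-lam)*β := by rw [IFy1, I4]; try ring
    have h2 := neg_int_le_abs (fun x => f x * y₁ x) (by norm_num : (-1:ℝ) ≤ 0)
    have hc : (∫ x in (-1:ℝ)..0, |f x * y₁ x|) = J2 := by
      rw [hJ2def]; exact intervalIntegral.integral_congr (fun x _ => by rw [abs_mul, abs_mul, mul_comm])
    rw [hc, h] at h2
    have h3 : -(q*p) ≤ |p| * |q| := by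
      calc -(q*p) ≤ |q*p| := neg_le_abs _
        _ = |p| * |q| := by rw [abs_mul, mul_comm]
    linarith
  -- β ≤ J1
  have Hβ : β ≤ J1 := by
    have h := neg_int_le_abs (fun x => y x * y₂ x) (by norm_num : (-1:ℝ) ≤ 0)
    rw [← hJ1def] at h; linarith [I5, h]
  -- trace bound:  q² ≤ d + 2 Jq
  have H6 : q^2 ≤ d + 2*Jq := by
    obtain ⟨x₀, hx₀, hmin⟩ := isCompact_Icc.exists_isMinOn
      (Set.nonempty_Icc.mpr (by norm_num : (-1:ℝ) ≤ 0))
      ((hcy2.pow 2).continuousOn : ContinuousOn (fun x => (y₂ x)^2) (Set.Icc (-1) 0))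
    have hmin1 : (y₂ x₀)^2 ≤ d := by
      have hstep : (∫ x in (-1:ℝ)..0, (y₂ x₀)^2) ≤ ∫ x in (-1:ℝ)..0, (y₂ x)^2 :=
        intervalIntegral.integral_mono_on (by norm_num)
          (intervalIntegrable_const (μ := volume))
          ((hcy2.pow 2).intervalIntegrable _ _) (fun x hx => hmin hx)
      rw [hddef]; simpa using hstep
    have hftc : (∫ t in (-1:ℝ)..x₀, 2*y₂ t*y₃ t) = (y₂ x₀)^2 - q^2 := by
      have := intervalIntegral.integral_eq_sub_of_hasDerivAt
        (f := fun x => (y₂ x)^2) (f' := fun t => 2*y₂ t*y₃ t) (a := (-1:ℝ)) (b := x₀)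
        (fun t _ => by simpa using (Hy2 t).fun_pow 2)
        (((continuous_const.mul hcy2).mul hcy3).intervalIntegrable _ _)
      rw [this, hqdef]
    have habs : -(∫ t in (-1:ℝ)..x₀, 2*y₂ t*y₃ t) ≤ ∫ t in (-1:ℝ)..x₀, |2*y₂ t*y₃ t| :=
      neg_int_le_abs _ hx₀.1
    have hmono : (∫ t in (-1:ℝ)..x₀, |2*y₂ t*y₃ t|) ≤ ∫ t in (-1:ℝ)..0, |2*y₂ t*y₃ t| := by
      have hadd : (∫ t in (-1:ℝ)..x₀, |2*y₂ t*y₃ t|) + (∫ t in x₀..(0:ℝ), |2*y₂ t*y₃ t|)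
          = ∫ t in (-1:ℝ)..0, |2*y₂ t*y₃ t| :=
        intervalIntegral.integral_add_adjacent_intervals
          ((((continuous_const.mul hcy2).mul hcy3).abs).intervalIntegrable _ _)
          ((((continuous_const.mul hcy2).mul hcy3).abs).intervalIntegrable _ _)
      have hpos : 0 ≤ ∫ t in x₀..(0:ℝ), |2*y₂ t*y₃ t| :=
        intervalIntegral.integral_nonneg hx₀.2 (fun t _ => abs_nonneg _)
      linarith [hadd]
    have h2Jq : (∫ t in (-1:ℝ)..0, |2*y₂ t*y₃ t|) = 2*Jq := by
      rw [hJqdef, ← intervalIntegral.integral_const_mul]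
      exact intervalIntegral.integral_congr (fun t _ => by
        rw [mul_assoc, abs_mul, abs_two])
    linarith [hmin1, hftc, habs, hmono, h2Jq]
  -- e ≤ 2 φ + 2 (a-lam)² β
  have H8 : e ≤ 2*φ + 2*(a-lam)^2*β := by
    have key : ∀ x ∈ Set.Icc (-1:ℝ) 0,
        (y₃ x)^2 ≤ 2*(f x)^2 + 2*(a-lam)^2*(y₁ x)^2 := by
      intro x _
      have hfx : y₃ x = f x - (a-lam)*y₁ x := by rw [hfdef]; ring
      rw [hfx]
      nlinarith only [sq_nonneg (f x + (a-lam)*y₁ x)]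
    have hstep := intervalIntegral.integral_mono_on (μ := volume) (f := fun x => (y₃ x)^2) (g := fun x => 2*(f x)^2 + 2*(a-lam)^2*(y₁ x)^2) (by norm_num : (-1:ℝ) ≤ 0)
      ((hcy3.pow 2).intervalIntegrable _ _)
      (((continuous_const.mul (hcf.pow 2)).add
        (continuous_const.mul (hcy1.pow 2))).intervalIntegrable _ _) key
    rw [intervalIntegral.integral_add (f := fun x => 2*(f x)^2) (g := fun x => 2*(a-lam)^2*(y₁ x)^2) ((continuous_const.mul (hcf.pow 2)).intervalIntegrable _ _)
        ((continuous_const.mul (hcy1.pow 2)).intervalIntegrable _ _),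
      intervalIntegral.integral_const_mul, intervalIntegral.integral_const_mul, hφf,
      ← hβdef] at hstep
    rw [hedef]; exact hstep
  -- Young inequalities
  have HY1 : 2*(4*a+1)*J1 ≤ (4*a+1)^2*α + d := by
    rw [hJ1def, hαdef, hddef]; exact young_int y y₂ hcy hcy2 (by linarith)
  have HY2 : 2*(m^2/4)*J2 ≤ (m^2/4)^2*β + φ := by
    rw [hJ2def, hβdef, ← hφf]; exact young_int y₁ f hcy1 hcf (by positivity)
  have HY5 : 2*(m^3)*Jf ≤ (m^3)^2*α + φ := by
    rw [hJfdef, hαdef, ← hφf]; exact young_int y f hcy hcf (by positivity)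
  set s₂ : ℝ := 4*c₂*m/K with hs₂def
  have hs₂ : 0 < s₂ := by rw [hs₂def]; positivity
  have HY7 : 2*s₂*Jq ≤ s₂^2*d + e := by
    rw [hJqdef, hddef, hedef]; exact young_int y₂ y₃ hcy2 hcy3 hs₂
  -- ============ algebra ============
  clear_value m₀ c₂ K m y₁ y₂ y₃ f α β d e φ p q J1 J2 Jf Jq s₂
  have hJ10 : 0 ≤ J1 := by rw [hJ1def]; exact absint_nonneg _
  have hJ20 : 0 ≤ J2 := by rw [hJ2def]; exact absint_nonneg _
  have hJf0 : 0 ≤ Jf := by rw [hJfdef]; exact absint_nonneg _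
  have hJq0 : 0 ≤ Jq := by rw [hJqdef]; exact absint_nonneg _
  have hm₀4 : (0:ℝ) < m₀^4 := pow_pos hm₀ 4
  have ha4 : (0:ℝ) < 4*a+1 := by linarith only [ha]
  have hKm : (8:ℝ) ≤ K*m := by
    have h8 : 8/m₀ ≤ K := by
      rw [hKdef]
      nlinarith only [hc₂, div_pos (by norm_num : (0:ℝ) < 8) hm₀]
    have h9 : (8/m₀)*m₀ ≤ K*m := mul_le_mul h8 hmm₀ hm₀.le (by linarith only [hK])
    rw [div_mul_cancel₀ _ hm₀.ne'] at h9
    exact h9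
  have hK8 : 8*c₂ + 8 ≤ K := by
    rw [hKdef]
    have : 0 < 8/m₀ := div_pos (by norm_num) hm₀
    linarith only [this]
  have hK2 : 32*c₂ ≤ K^2 := by
    nlinarith only [mul_self_le_mul_self (by linarith only [hc₂] : (0:ℝ) ≤ 8*c₂+8) hK8, hc₂]
  -- step SA
  have SA : a*(lam*β) ≤ lam*d/8 + (a*(4*a+1)/(2*m₀^4))*(lam^3*α) := by
    have sa5 : (2*(4*a+1))*(a*lam*J1) ≤ (2*(4*a+1))*(a*lam*(4*a+1)*α/2 + lam*d/8) := by
      have u := mul_le_mul_of_nonneg_left HY1 (mul_nonneg ha hlampos.le)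
      nlinarith only [u, mul_nonneg hlampos.le hd0, ha]
    have sa6 : a*lam*J1 ≤ a*lam*(4*a+1)*α/2 + lam*d/8 :=
      le_of_mul_le_mul_left sa5 (by linarith only [ha4])
    have hm₀4e : m₀^4 = lam₀^2 := by rw [← hm₀2]; ring
    have hmono : m₀^4*lam ≤ lam^3 := by
      rw [hm₀4e]
      nlinarith only [mul_self_le_mul_self hlam₀.le hlam, hlampos, hlam₀]
    have sa7 : a*lam*(4*a+1)*α/2 ≤ (a*(4*a+1)/(2*m₀^4))*(lam^3*α) := by
      have hnn : (0:ℝ) ≤ a*(4*a+1)*α/(2*m₀^4) :=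
        div_nonneg (mul_nonneg (mul_nonneg ha ha4.le) hα0) (by linarith only [hm₀4])
      calc a*lam*(4*a+1)*α/2 = (a*(4*a+1)*α/(2*m₀^4))*(m₀^4*lam) := by
            field_simp
        _ ≤ (a*(4*a+1)*α/(2*m₀^4))*lam^3 := mul_le_mul_of_nonneg_left hmono hnn
        _ = (a*(4*a+1)/(2*m₀^4))*(lam^3*α) := by ring
    have saβ : a*(lam*β) ≤ a*lam*J1 := by
      nlinarith only [mul_le_mul_of_nonneg_left Hβ (mul_nonneg ha hlampos.le)]
    linarith only [sa6, sa7, saβ]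
  -- step SB
  have SB : lam*J2 ≤ 2*φ + lam^2*β/8 := by
    have h := HY2; rw [hm2] at h
    nlinarith only [h]
  -- step SC
  have SC : lam*(|p| * |q|) ≤ (K/2)*φ + (K/2)*(lam^3*α) + lam*d/8 + e/(8*c₂) := by
    have sc1 : 2*(K*m)*(|p| * |q|) ≤ (K*m)^2*p^2 + q^2 := by
      nlinarith only [sq_nonneg (K*m*|p| - |q|), sq_abs p, sq_abs q, abs_nonneg p,
        abs_nonneg q, mul_pos hK hm]
    have sc3 : lam*(|p| * |q|) ≤ (m/(2*K))*((K*m)^2*p^2 + q^2) := by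
      have heq : lam*(|p| * |q|) = (m/(2*K))*(2*(K*m)*(|p| * |q|)) := by
        rw [← hm2]; field_simp
      rw [heq]
      exact mul_le_mul_of_nonneg_left sc1 (le_of_lt (div_pos hm (by linarith only [hK])))
    have sc4 : (m/(2*K))*((K*m)^2*p^2 + q^2) = (K*m^3/2)*p^2 + (m/(2*K))*q^2 := by
      field_simp
    have sc5 : (K*m^3/2)*p^2 ≤ (K/2)*φ + (K/2)*(lam^3*α) := by
      have u1 := mul_le_mul_of_nonneg_left H4
        (by positivity : (0:ℝ) ≤ K*m^3/2)
      have u2 := mul_le_mul_of_nonneg_left HY5 (by positivity : (0:ℝ) ≤ K/2)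
      have hm6αK : K*((m^3)^2*α) = K*(lam^3*α) := by
        rw [show ((m:ℝ)^3)^2 = m^6 by ring, hm6]
      nlinarith only [u1, u2, hm6αK]
    have sc6 : (m/(2*K))*q^2 ≤ lam*d/8 + e/(8*c₂) := by
      have v0 : (m/(2*K))*q^2 ≤ (m/(2*K))*(d + 2*Jq) :=
        mul_le_mul_of_nonneg_left H6 (le_of_lt (div_pos hm (by linarith only [hK])))
      have v1 : (m/K)*Jq ≤ (m/(2*K*s₂))*(s₂^2*d + e) := by
        have w := mul_le_mul_of_nonneg_left HY7
          (le_of_lt (div_pos hm (by nlinarith only [mul_pos hK hs₂] : (0:ℝ) < 2*K*s₂)))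
        have heq : (m/K)*Jq = (m/(2*K*s₂))*(2*s₂*Jq) := by
          field_simp
        rw [heq]; exact w
      have v2 : (m/(2*K*s₂))*(s₂^2*d + e) = (2*c₂*m^2/K^2)*d + e/(8*c₂) := by
        rw [hs₂def]; field_simp; ring
      have w1 : (m/(2*K))*d ≤ (m^2/16)*d := by
        apply mul_le_mul_of_nonneg_right _ hd0
        rw [div_le_div_iff₀ (by linarith only [hK]) (by norm_num)]
        nlinarith only [hKm, hm]
      have w2 : (2*c₂*m^2/K^2)*d ≤ (m^2/16)*d := by
        apply mul_le_mul_of_nonneg_right _ hd0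
        rw [div_le_div_iff₀ (pow_pos hK 2) (by norm_num)]
        nlinarith only [hK2, sq_nonneg m, hm]
      have hm2d : (m^2/16)*d + (m^2/16)*d = lam*d/8 := by rw [hm2]; ring
      have hexp : (m/(2*K))*(d + 2*Jq) = (m/(2*K))*d + (m/K)*Jq := by
        field_simp
      rw [hexp] at v0
      linarith only [v0, v1, v2, w1, w2, hm2d]
    linarith only [sc3, sc4, sc5, sc6]
  -- step SD
  have H8' : 2*(a-lam)^2 ≤ c₂*m^4 := by
    have t1 : a ≤ (a/lam₀)*lam := by
      have h0 : a = (a/lam₀)*lam₀ := by field_simp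
      nlinarith only [div_nonneg ha hlam₀.le, hlam, h0]
    have t2 := mul_self_le_mul_self (by positivity : (0:ℝ) ≤ a + lam)
      (by linarith only [t1] : a + lam ≤ (1+a/lam₀)*lam)
    rw [hm4, hc₂def]
    nlinarith only [t2, mul_nonneg ha hlampos.le]
  have he2 : e ≤ 2*φ + c₂*(lam^2*β) := by
    have hh := mul_le_mul_of_nonneg_right H8' hβ0
    have hm4β : c₂*m^4*β = c₂*(lam^2*β) := by rw [hm4]; ring
    nlinarith only [H8, hh, hm4β]
  have SD : e/(8*c₂) ≤ φ + lam^2*β/8 := by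
    rw [div_le_iff₀ (by linarith only [hc₂] : (0:ℝ) < 8*c₂)]
    nlinarith only [he2, mul_nonneg (by linarith only [hc₂] : (0:ℝ) ≤ 8*c₂-2) hφ0]
  -- ledger
  have L0 : lam*d + lam^2*β ≤ a*(lam*β) + lam*(|p| * |q|) + lam*J2 := by
    nlinarith only [mul_le_mul_of_nonneg_left H9 hlampos.le]
  have G1 : lam*d + lam^2*β
      ≤ (4/3)*((3+K/2)*φ + (K/2 + a*(4*a+1)/(2*m₀^4))*(lam^3*α)) := by
    linarith only [L0, SA, SB, SC, SD]
  have hlam3α : (0:ℝ) ≤ lam^3*α := by positivity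
  have hc30 : (0:ℝ) ≤ 3+K/2 := by positivity
  have hc40 : (0:ℝ) ≤ K/2 + a*(4*a+1)/(2*m₀^4) := by
    have h := div_nonneg (mul_nonneg ha ha4.le) (by linarith only [hm₀4] : (0:ℝ) ≤ 2*m₀^4)
    exact add_nonneg (by positivity) h
  have G2 : lam*d + lam^2*β
      ≤ (4/3)*((3+K/2) + (K/2 + a*(4*a+1)/(2*m₀^4)))*(φ + lam^3*α) := by
    nlinarith only [G1, mul_nonneg hc30 hlam3α, mul_nonneg hc40 hφ0]
  have he3 : e ≤ 2*φ + c₂*(lam*d + lam^2*β) := by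
    nlinarith only [he2, mul_nonneg (by linarith only [hc₂] : (0:ℝ) ≤ c₂)
      (mul_nonneg hlampos.le hd0)]
  have he4 := mul_le_mul_of_nonneg_left G2 (by linarith only [hc₂] : (0:ℝ) ≤ c₂)
  nlinarith only [he3, he4, G2, hφ0, hlam3α]
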